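/- Let Λ be a d×d complex matrix, λ ∈ ℂ an eigenvalue of Λ of algebraic multiplicity one, and δ > 0 such that every eigenvalue μ ≠ λ of Λ satisfies Im μ ≥ Im λ + δ. Then for every η > 0 there exists a d×d complex matrix Λ' such that: ‖Λ − Λ'‖ ≤ η (operator norm with respect to the Euclidean norm on ℂ^d); Λ' is diagonalizable (ℂ^d has a basis of eigenvectors of Λ'); λ is an eigenvalue of Λ' of algebraic multiplicity one; and every eigenvalue μ' ≠ λ of Λ' satisfies Im μ' ≥ Im λ + δ. -/

import Mathlib

set_option maxHeartbeats 1000000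

open Polynomial Matrix Module

lemma eval_charpoly' {n : ℕ} (M : Matrix (Fin n) (Fin n) ℂ) (μ : ℂ) :
    M.charpoly.eval μ = (Matrix.diagonal (fun _ => μ) - M).det := by
  rw [Matrix.charpoly, ← Polynomial.coe_evalRingHom, RingHom.map_det]
  congr 1
  ext i j
  rcases eq_or_ne i j with rfl | h
  · simp [Matrix.charmatrix_apply_eq]
  · simp [Matrix.charmatrix_apply_ne _ _ _ h, Matrix.diagonal_apply_ne _ h]

lemma mem_spectrum_iff_root {n : ℕ} (M : Matrix (Fin n) (Fin n) ℂ) (μ : ℂ) :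
    μ ∈ spectrum ℂ M ↔ M.charpoly.IsRoot μ := by
  have halg : (algebraMap ℂ (Matrix (Fin n) (Fin n) ℂ)) μ = Matrix.diagonal (fun _ => μ) := by
    ext i j
    simp [Matrix.algebraMap_matrix_apply, Matrix.diagonal]
  rw [spectrum.mem_iff, Polynomial.IsRoot, eval_charpoly', halg,
    Matrix.isUnit_iff_isUnit_det, isUnit_iff_ne_zero, not_not]

open Polynomial Matrix

lemma charpoly_conj' {n : ℕ} (A P : Matrix (Fin n) (Fin n) ℂ) (hP : IsUnit P.det) :
    (P⁻¹ * A * P).charpoly = A.charpoly := by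
  have h1 : P⁻¹ * P = 1 := Matrix.nonsing_inv_mul P hP
  have hscalar : ∀ Q : Matrix (Fin n) (Fin n) ℂ,
      Matrix.scalar (Fin n) (X : ℂ[X]) * (Q.map Polynomial.C) =
        (Q.map Polynomial.C) * Matrix.scalar (Fin n) (X : ℂ[X]) :=
    fun Q => Matrix.scalar_commute (X : ℂ[X]) (fun r' => Commute.all _ _) _
  have key : charmatrix (P⁻¹ * A * P) =
      (P⁻¹).map Polynomial.C * charmatrix A * P.map Polynomial.C := by
    rw [charmatrix, charmatrix, mul_sub, sub_mul]
    congr 1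
    · rw [mul_assoc, hscalar P, ← mul_assoc, ← Matrix.map_mul, h1]
      simp
    · rw [RingHom.mapMatrix_apply, RingHom.mapMatrix_apply, ← Matrix.map_mul, ← Matrix.map_mul]
  rw [Matrix.charpoly, Matrix.charpoly, key, Matrix.det_mul, Matrix.det_mul,
    mul_comm ((P⁻¹).map Polynomial.C).det, mul_assoc, ← Matrix.det_mul, ← Matrix.map_mul, h1]
  simp

noncomputable def sumEquiv (n : ℕ) : (Fin 1 ⊕ Fin n) ≃ Fin (n + 1) where
  toFun := Sum.elim (fun _ => 0) Fin.succ
  invFun := fun i => Fin.cases (Sum.inl 0) Sum.inr i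
  left_inv := by rintro (⟨i, hi⟩ | j); · simp [Fin.eq_zero]
                 · simp
  right_inv := by intro i; induction i using Fin.cases <;> simp

lemma exists_triangular : ∀ (n : ℕ) (A : Matrix (Fin n) (Fin n) ℂ),
    ∃ P : Matrix (Fin n) (Fin n) ℂ, IsUnit P.det ∧ (P⁻¹ * A * P).BlockTriangular id := by
  intro n
  induction n with
  | zero =>
    intro A
    exact ⟨1, by simp, by intro i; exact i.elim0⟩
  | succ n ih =>
    intro A
    -- obtain an eigenvector
    obtain ⟨μ, hμ⟩ := Module.End.exists_eigenvalue (A.mulVecLin)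
    obtain ⟨v, hv⟩ := hμ.exists_hasEigenvector
    have hv0 : v ≠ 0 := hv.right
    -- complement of the span of v
    obtain ⟨W, hW⟩ := Submodule.exists_isCompl (Submodule.span ℂ {v})
    have hrank : finrank ℂ W = n := by
      have h1 : finrank ℂ (Submodule.span ℂ {v}) = 1 := finrank_span_singleton hv0
      have h2 := Submodule.finrank_add_eq_of_isCompl hW
      have h3 : finrank ℂ (Fin (n+1) → ℂ) = n + 1 := by simp
      omega
    let bW : Basis (Fin n) ℂ W := (Module.finBasis ℂ W).reindex (finCongr hrank)
    have hli : ∀ (c : ℂ), ∀ x ∈ W, c • v + x = 0 → c = 0 := by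
      intro c x hx hcx
      by_contra hc
      have hvW : v ∈ W := by
        have h1 : c • v = -x := eq_neg_of_add_eq_zero_left hcx
        have h2 : v = c⁻¹ • (-x) := by
          rw [← h1, smul_smul, inv_mul_cancel₀ hc, one_smul]
        rw [h2]
        exact W.smul_mem _ (W.neg_mem hx)
      have hv_mem : v ∈ Submodule.span ℂ {v} ⊓ W :=
        ⟨Submodule.mem_span_singleton_self v, hvW⟩
      rw [hW.inf_eq_bot] at hv_mem
      exact hv0 hv_mem
    have hsp : ∀ z : Fin (n+1) → ℂ, ∃ c : ℂ, z + c • v ∈ W := by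
      intro z
      have hz : z ∈ Submodule.span ℂ {v} ⊔ W := by rw [hW.sup_eq_top]; trivial
      rw [Submodule.mem_sup] at hz
      obtain ⟨y, hy, w, hw, rfl⟩ := hz
      rw [Submodule.mem_span_singleton] at hy
      obtain ⟨a, rfl⟩ := hy
      exact ⟨-a, by simpa using hw⟩
    let b : Basis (Fin (n+1)) ℂ (Fin (n+1) → ℂ) := Basis.mkFinCons v bW hli hsp
    have hb0 : b 0 = v := by simp [b, Basis.coe_mkFinCons]
    -- the matrix in this basis
    let e₀ : Basis (Fin (n+1)) ℂ (Fin (n+1) → ℂ) := Pi.basisFun ℂ (Fin (n+1))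
    let M : Matrix (Fin (n+1)) (Fin (n+1)) ℂ := LinearMap.toMatrix b b (A.mulVecLin)
    set P₁ : Matrix (Fin (n+1)) (Fin (n+1)) ℂ := e₀.toMatrix b with hP₁
    set Q₁ : Matrix (Fin (n+1)) (Fin (n+1)) ℂ := b.toMatrix e₀ with hQ₁
    have hQP : Q₁ * P₁ = 1 := Basis.toMatrix_mul_toMatrix_flip b e₀
    have hPQ : P₁ * Q₁ = 1 := Basis.toMatrix_mul_toMatrix_flip e₀ b
    have hP₁det : IsUnit P₁.det := by
      have := congrArg Matrix.det hQP
      rw [Matrix.det_mul, Matrix.det_one] at this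
      exact IsUnit.of_mul_eq_one _ (by rw [mul_comm] at this; exact this)
    have hP₁inv : P₁⁻¹ = Q₁ := Matrix.inv_eq_left_inv hQP
    have hM : Q₁ * A * P₁ = M := by
      rw [hQ₁, hP₁, basis_toMatrix_mul b e₀ e₀ A,
        linearMap_toMatrix_mul_basis_toMatrix]
      congr 1
    have hMcol : ∀ i : Fin (n+1), i ≠ 0 → M i 0 = 0 := by
      intro i hi
      have : M i 0 = b.repr (A.mulVecLin (b 0)) i := LinearMap.toMatrix_apply _ _ _ _ _
      rw [this, hb0, hv.apply_eq_smul, _root_.map_smul, ← hb0, b.repr_self]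
      simp [Finsupp.single_apply, Ne.symm hi]
    -- induction on the lower-right block
    set B : Matrix (Fin n) (Fin n) ℂ := M.submatrix Fin.succ Fin.succ with hB
    obtain ⟨R, hRdet, hRtri⟩ := ih B
    have hRR : R⁻¹ * R = 1 := Matrix.nonsing_inv_mul R hRdet
    set e := sumEquiv n
    set S' : Matrix (Fin 1 ⊕ Fin n) (Fin 1 ⊕ Fin n) ℂ := fromBlocks 1 0 0 R with hS'
    set T' : Matrix (Fin 1 ⊕ Fin n) (Fin 1 ⊕ Fin n) ℂ := fromBlocks 1 0 0 R⁻¹ with hT'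
    set P₂ : Matrix (Fin (n+1)) (Fin (n+1)) ℂ := S'.submatrix e.symm e.symm with hP₂
    set Q₂ : Matrix (Fin (n+1)) (Fin (n+1)) ℂ := T'.submatrix e.symm e.symm with hQ₂
    have hQP₂ : Q₂ * P₂ = 1 := by
      rw [hQ₂, hP₂, Matrix.submatrix_mul_equiv T' S' _ e.symm _, hT', hS',
        Matrix.fromBlocks_multiply]
      simp [hRR, Matrix.submatrix_one_equiv]
    have hP₂det : IsUnit P₂.det := by
      have := congrArg Matrix.det hQP₂
      rw [Matrix.det_mul, Matrix.det_one] at this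
      exact IsUnit.of_mul_eq_one _ (by rw [mul_comm] at this; exact this)
    have hP₂inv : P₂⁻¹ = Q₂ := Matrix.inv_eq_left_inv hQP₂
    -- the conjugated matrix
    refine ⟨P₁ * P₂, by rw [Matrix.det_mul]; exact hP₁det.mul hP₂det, ?_⟩
    have hinv : (P₁ * P₂)⁻¹ = Q₂ * Q₁ := by
      rw [Matrix.mul_inv_rev, hP₁inv, hP₂inv]
    rw [hinv]
    have hconj : Q₂ * Q₁ * A * (P₁ * P₂) = Q₂ * M * P₂ := by
      rw [← hM]; simp only [Matrix.mul_assoc]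
    rw [hconj]
    -- compute Q₂ * M * P₂ as blocks
    set F : Matrix (Fin 1 ⊕ Fin n) (Fin 1 ⊕ Fin n) ℂ :=
      fromBlocks (Matrix.of fun _ _ => M 0 0) (Matrix.of fun _ j => M 0 j.succ) 0 B with hF
    have hMblocks : M = F.submatrix e.symm e.symm := by
      ext i j
      rcases Fin.eq_zero_or_eq_succ i with rfl | ⟨i', rfl⟩ <;>
        rcases Fin.eq_zero_or_eq_succ j with rfl | ⟨j', rfl⟩
      · simp [hF, e, sumEquiv]
      · simp [hF, e, sumEquiv]
      · simp [hF, e, sumEquiv, hMcol _ (Fin.succ_ne_zero i')]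
      · simp [hF, e, sumEquiv, hB]
    have hcalc : Q₂ * M * P₂ = (T' * F * S').submatrix e.symm e.symm := by
      conv_lhs => rw [hMblocks]
      rw [hQ₂, hP₂, Matrix.submatrix_mul_equiv, Matrix.submatrix_mul_equiv]
    have hfb : T' * F * S' = fromBlocks (Matrix.of fun _ _ => M 0 0)
        ((Matrix.of fun _ j => M 0 j.succ) * R) 0 (R⁻¹ * B * R) := by
      rw [hT', hS', hF, Matrix.fromBlocks_multiply, Matrix.fromBlocks_multiply]
      congr 1 <;> simp [Matrix.mul_assoc] <;> rfl
    rw [hcalc, hfb]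
    -- triangularity
    intro i j hij
    simp only [Matrix.submatrix_apply]
    rcases Fin.eq_zero_or_eq_succ i with rfl | ⟨i', rfl⟩
    · exact absurd hij (by simp)
    rcases Fin.eq_zero_or_eq_succ j with rfl | ⟨j', rfl⟩
    · simp [e, sumEquiv]
    · have hji : j' < i' := by
        simpa [Fin.succ_lt_succ_iff] using hij
      simp only [e, sumEquiv]
      simpa using hRtri (show (id j' : Fin n) < id i' from hji)

lemma exists_distinct_shifts {ι : Type*} [DecidableEq ι] (t : ι → ℂ) (ε : ℝ) (hε : 0 < ε)
    (avoid : Finset ℂ) (s : Finset ι) :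
    ∃ c : ι → ℝ, (∀ i, 0 < c i ∧ c i ≤ ε) ∧
      (Set.InjOn (fun i => t i + c i * Complex.I) s) ∧
      ∀ i ∈ s, (t i + c i * Complex.I) ∉ avoid := by
  classical
  induction s using Finset.induction_on with
  | empty => exact ⟨fun _ => ε, fun i => ⟨hε, le_rfl⟩, by simp, by simp⟩
  | @insert a s ha ih =>
    obtain ⟨c, hc, hinj, hav⟩ := ih
    have hinjr : Function.Injective (fun r : ℝ => t a + r * Complex.I) := by
      intro r₁ r₂ h
      simpa [Complex.ext_iff] using h
    set badC : Finset ℂ := avoid ∪ s.image (fun i => t i + c i * Complex.I) with hbadC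
    have hbadfin : ((fun r : ℝ => t a + r * Complex.I) ⁻¹' (badC : Set ℂ)).Finite :=
      Set.Finite.preimage hinjr.injOn (badC.finite_toSet)
    have hIoc : (Set.Ioc (0:ℝ) ε).Infinite := Set.Ioc_infinite hε
    obtain ⟨r, hrIoc, hrbad⟩ := ((hIoc.diff hbadfin).nonempty : (Set.Ioc (0:ℝ) ε \ _).Nonempty)
    have hrnot : (t a + r * Complex.I) ∉ badC := hrbad
    refine ⟨Function.update c a r, ?_, ?_, ?_⟩
    · intro i
      rcases eq_or_ne i a with rfl | h
      · simpa [Function.update_self] using ⟨hrIoc.1, hrIoc.2⟩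
      · simpa [Function.update_of_ne h] using hc i
    · intro i hi j hj hij
      simp only [Finset.coe_insert, Set.mem_insert_iff, Finset.mem_coe] at hi hj
      rcases hi with rfl | hi
      · rcases hj with rfl | hj
        · rfl
        · exfalso
          have hja : j ≠ i := fun h => ha (h ▸ hj)
          simp only [Function.update_self, Function.update_of_ne hja] at hij
          apply hrnot
          rw [hbadC, hij]
          exact Finset.mem_union_right _ (Finset.mem_image_of_mem _ hj)
      · rcases hj with rfl | hj
        · exfalso
          have hia : i ≠ j := fun h => ha (h ▸ hi)
          simp only [Function.update_self, Function.update_of_ne hia] at hij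
          apply hrnot
          rw [hbadC, ← hij]
          exact Finset.mem_union_right _ (Finset.mem_image_of_mem _ hi)
        · have hia : i ≠ a := fun h => ha (h ▸ hi)
          have hja : j ≠ a := fun h => ha (h ▸ hj)
          simp only [Function.update_of_ne hia, Function.update_of_ne hja] at hij
          exact hinj hi hj hij
    · intro i hi
      rcases Finset.mem_insert.mp hi with rfl | his
      · rw [Function.update_self]
        exact fun hmem => hrnot (Finset.mem_union_left _ hmem)
      · have hia : i ≠ a := fun h => ha (h ▸ his)
        rw [Function.update_of_ne hia]
        exact hav i his

lemma rootMult_prod {n : ℕ} (t : Fin n → ℂ) (lam : ℂ) :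
    (∏ i, (X - C (t i))).rootMultiplicity lam
      = (Finset.univ.filter (fun i => t i = lam)).card := by
  classical
  rw [← Polynomial.count_roots]
  have h1 : ∏ i, (X - C (t i))
      = (Multiset.map (fun a => X - C a) (Finset.univ.val.map t)).prod := by
    rw [Multiset.map_map]
    rfl
  rw [h1, Polynomial.roots_multiset_prod_X_sub_C, Multiset.count_map]
  rw [Finset.card_filter]
  simp [Finset.sum_ite_eq, eq_comm]
  congr 1

lemma norm_toEuclideanCLM_diagonal {n : ℕ} (v : Fin n → ℂ) (ε : ℝ) (hε : 0 ≤ ε)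
    (h : ∀ i, ‖v i‖ ≤ ε) :
    ‖Matrix.toEuclideanCLM (𝕜 := ℂ) (Matrix.diagonal v)‖ ≤ ε := by
  refine ContinuousLinearMap.opNorm_le_bound _ hε (fun y => ?_)
  have hy : Matrix.toEuclideanCLM (𝕜 := ℂ) (Matrix.diagonal v) y
      = (WithLp.equiv 2 (Fin n → ℂ)).symm ((Matrix.diagonal v).mulVec ((WithLp.equiv 2 (Fin n → ℂ)) y)) := by
    rfl
  rw [hy, EuclideanSpace.norm_eq, EuclideanSpace.norm_eq]
  have hsum : ∑ i, ‖(Matrix.diagonal v).mulVec ((WithLp.equiv 2 (Fin n → ℂ)) y) i‖ ^ 2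
      ≤ ε ^ 2 * ∑ i, ‖y i‖ ^ 2 := by
    rw [Finset.mul_sum]
    apply Finset.sum_le_sum
    intro i _
    rw [Matrix.mulVec_diagonal, norm_mul]
    have h1 : ‖v i‖ * ‖((WithLp.equiv 2 (Fin n → ℂ)) y) i‖ ≤ ε * ‖y i‖ := by
      apply mul_le_mul (h i) le_rfl (norm_nonneg _) hε
    calc (‖v i‖ * ‖((WithLp.equiv 2 (Fin n → ℂ)) y) i‖) ^ 2 ≤ (ε * ‖y i‖)^2 := by
          apply pow_le_pow_left₀ (by positivity) h1
      _ = ε ^ 2 * ‖y i‖ ^ 2 := by ring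
  calc Real.sqrt (∑ i, ‖(Matrix.diagonal v).mulVec ((WithLp.equiv 2 (Fin n → ℂ)) y) i‖ ^ 2)
      ≤ Real.sqrt (ε ^ 2 * ∑ i, ‖y i‖ ^ 2) := Real.sqrt_le_sqrt hsum
    _ = ε * Real.sqrt (∑ i, ‖y i‖ ^ 2) := by
        rw [Real.sqrt_mul (by positivity), Real.sqrt_sq hε]


/-- **Diagonalizable approximation of the level shift operator.**
Let `Λ` be a `d × d` complex matrix, `lam` an eigenvalue of `Λ` of algebraic
multiplicity one, and `δ > 0` such that every other eigenvalue `μ ≠ lam` satisfies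
`Im μ ≥ Im lam + δ`. Then for every `η > 0` there is a `d × d` complex matrix `Λ'`
with `‖Λ - Λ'‖ ≤ η` (operator norm w.r.t. the Euclidean norm on `ℂ^d`), such that
`Λ'` is diagonalizable, `lam` is an eigenvalue of `Λ'` of algebraic multiplicity one,
and every eigenvalue `μ' ≠ lam` of `Λ'` satisfies `Im μ' ≥ Im lam + δ`. -/
theorem diagonalizable_approximation_spectral_gap
    (d : ℕ) (hd : 1 ≤ d) (Λ : Matrix (Fin d) (Fin d) ℂ)
    (lam : ℂ) (hlam : lam ∈ spectrum ℂ Λ)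
    (hmult : (Matrix.charpoly Λ).rootMultiplicity lam = 1)
    (δ : ℝ) (hδ : 0 < δ)
    (hgap : ∀ μ ∈ spectrum ℂ Λ, μ ≠ lam → lam.im + δ ≤ μ.im)
    (η : ℝ) (hη : 0 < η) :
    ∃ Λ' : Matrix (Fin d) (Fin d) ℂ,
      ‖Matrix.toEuclideanCLM (𝕜 := ℂ) (Λ - Λ')‖ ≤ η ∧
      (∃ v : Basis (Fin d) ℂ (Fin d → ℂ), ∀ i, ∃ μ : ℂ, Λ'.mulVecLin (v i) = μ • v i) ∧
      lam ∈ spectrum ℂ Λ' ∧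
      (Matrix.charpoly Λ').rootMultiplicity lam = 1 ∧
      ∀ μ ∈ spectrum ℂ Λ', μ ≠ lam → lam.im + δ ≤ μ.im := by
  classical
  have hne : Nonempty (Fin d) := ⟨⟨0, hd⟩⟩
  obtain ⟨P, hPdet, hTri⟩ := exists_triangular d Λ
  have hQP : P⁻¹ * P = 1 := Matrix.nonsing_inv_mul P hPdet
  have hPQ : P * P⁻¹ = 1 := Matrix.mul_nonsing_inv P hPdet
  set T := P⁻¹ * Λ * P with hT
  have hcp : T.charpoly = Λ.charpoly := charpoly_conj' Λ P hPdet
  set t : Fin d → ℂ := fun i => T i i with ht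
  have hcharT : T.charpoly = ∏ i, (X - C (t i)) := Matrix.charpoly_of_upperTriangular T hTri
  have hcount : (Finset.univ.filter (fun i => t i = lam)).card = 1 := by
    rw [← rootMult_prod, ← hcharT, hcp, hmult]
  obtain ⟨i₀, hi₀⟩ := Finset.card_eq_one.mp hcount
  have ht₀ : t i₀ = lam := by
    have h := hi₀ ▸ Finset.mem_singleton_self i₀
    simpa using h
  have htne : ∀ i, i ≠ i₀ → t i ≠ lam := by
    intro i hi hti
    have h : i ∈ Finset.univ.filter (fun i => t i = lam) := by simpa using hti
    rw [hi₀, Finset.mem_singleton] at h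
    exact hi h
  have hspec : ∀ i, t i ∈ spectrum ℂ Λ := by
    intro i
    rw [mem_spectrum_iff_root, ← hcp, hcharT, Polynomial.IsRoot, Polynomial.eval_prod]
    apply Finset.prod_eq_zero (Finset.mem_univ i)
    simp
  -- norms
  set np := ‖Matrix.toEuclideanCLM (𝕜 := ℂ) P‖ with hnp
  set nq := ‖Matrix.toEuclideanCLM (𝕜 := ℂ) P⁻¹‖ with hnq
  have hnp0 : 0 ≤ np := norm_nonneg _
  have hnq0 : 0 ≤ nq := norm_nonneg _
  set ε := η / (np * nq + 1) with hεdef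
  have hεpos : 0 < ε := div_pos hη (by positivity)
  obtain ⟨c, hc, hinj, hav⟩ := exists_distinct_shifts t ε hεpos {lam} (Finset.univ.erase i₀)
  set c' : Fin d → ℂ := fun i => if i = i₀ then 0 else (c i : ℂ) * Complex.I with hc'
  set T' := T + Matrix.diagonal c' with hT'def
  set t' : Fin d → ℂ := fun i => t i + c' i with ht'
  have hcnorm : ∀ i, ‖c' i‖ ≤ ε := by
    intro i
    rw [hc']
    rcases eq_or_ne i i₀ with rfl | h
    · simp [hεpos.le]
    · simp only [if_neg h]
      rw [norm_mul, Complex.norm_I, mul_one, Complex.norm_real, Real.norm_eq_abs,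
        abs_of_pos (hc i).1]
      exact (hc i).2
  have hTri' : T'.BlockTriangular id := hTri.add (Matrix.blockTriangular_diagonal c')
  have hT'diag : ∀ i, T' i i = t' i := by
    intro i
    rw [hT'def, Matrix.add_apply, Matrix.diagonal_apply_eq]
  have ht'i₀ : t' i₀ = lam := by simp [ht', hc', ht₀]
  have ht'eq : ∀ i, i ≠ i₀ → t' i = t i + (c i : ℂ) * Complex.I := by
    intro i hi
    simp only [ht', hc', if_neg hi]
  have hinj' : Function.Injective t' := by
    intro i j hij
    by_cases hi : i = i₀ <;> by_cases hj : j = i₀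
    · rw [hi, hj]
    · exfalso
      apply hav j (Finset.mem_erase.mpr ⟨hj, Finset.mem_univ j⟩)
      rw [← ht'eq j hj, ← hij, hi, ht'i₀]
      exact Finset.mem_singleton_self lam
    · exfalso
      apply hav i (Finset.mem_erase.mpr ⟨hi, Finset.mem_univ i⟩)
      rw [← ht'eq i hi, hij, hj, ht'i₀]
      exact Finset.mem_singleton_self lam
    · refine hinj (Finset.mem_coe.mpr (Finset.mem_erase.mpr ⟨hi, Finset.mem_univ i⟩))
        (Finset.mem_coe.mpr (Finset.mem_erase.mpr ⟨hj, Finset.mem_univ j⟩)) ?_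
      show t i + (c i : ℂ) * Complex.I = t j + (c j : ℂ) * Complex.I
      rw [← ht'eq i hi, ← ht'eq j hj]
      exact hij
  -- facts about the conjugate matrix
  have hconj : P⁻¹ * (P * T' * P⁻¹) * P = T' := by
    rw [show P⁻¹ * (P * T' * P⁻¹) * P = (P⁻¹ * P) * T' * (P⁻¹ * P) by
      simp only [Matrix.mul_assoc], hQP]
    rw [Matrix.one_mul, Matrix.mul_one]
  have hcp' : (P * T' * P⁻¹).charpoly = ∏ i, (X - C (t' i)) := by
    rw [← charpoly_conj' (P * T' * P⁻¹) P hPdet, hconj,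
      Matrix.charpoly_of_upperTriangular T' hTri']
    exact Finset.prod_congr rfl (fun i _ => by rw [hT'diag])
  have hspec' : ∀ μ : ℂ, μ ∈ spectrum ℂ (P * T' * P⁻¹) ↔ ∃ i, t' i = μ := by
    intro μ
    rw [mem_spectrum_iff_root, Polynomial.IsRoot, hcp', Polynomial.eval_prod,
      Finset.prod_eq_zero_iff]
    constructor
    · rintro ⟨i, _, hi⟩
      refine ⟨i, ?_⟩
      simp only [Polynomial.eval_sub, Polynomial.eval_X, Polynomial.eval_C] at hi
      linear_combination -hi
    · rintro ⟨i, hi⟩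
      exact ⟨i, Finset.mem_univ i, by simp [hi]⟩
  have hEig : ∀ i : Fin d, Module.End.HasEigenvalue ((P * T' * P⁻¹).mulVecLin) (t' i) := by
    intro i
    have hmem : t' i ∈ spectrum ℂ (P * T' * P⁻¹) := (hspec' (t' i)).mpr ⟨i, rfl⟩
    rw [← AlgEquiv.spectrum_eq (Matrix.toLinAlgEquiv (Pi.basisFun ℂ (Fin d)))] at hmem
    have heq : (Matrix.toLinAlgEquiv (Pi.basisFun ℂ (Fin d))) (P * T' * P⁻¹)
        = (P * T' * P⁻¹).mulVecLin := by
      apply LinearMap.ext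
      intro v
      rw [Matrix.toLinAlgEquiv_apply]
      have hrepr : ⇑((Pi.basisFun ℂ (Fin d)).repr v) = v :=
        funext (fun i => Pi.basisFun_repr ℂ (Fin d) v i)
      rw [hrepr, Matrix.mulVecLin_apply]
      ext j
      simp [Pi.single_apply]
    rw [heq] at hmem
    exact Module.End.hasEigenvalue_iff_mem_spectrum.mpr hmem
  refine ⟨P * T' * P⁻¹, ?_, ?_, ?_, ?_, ?_⟩
  · -- norm bound
    have hPTP : P * T * P⁻¹ = Λ := by
      rw [hT, show P * (P⁻¹ * Λ * P) * P⁻¹ = (P * P⁻¹) * Λ * (P * P⁻¹) by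
        simp only [Matrix.mul_assoc], hPQ]
      rw [Matrix.one_mul, Matrix.mul_one]
    have hdiff : Λ - P * T' * P⁻¹ = -(P * Matrix.diagonal c' * P⁻¹) := by
      rw [hT'def, Matrix.mul_add, Matrix.add_mul, hPTP]
      abel
    rw [hdiff, map_neg, norm_neg, _root_.map_mul, _root_.map_mul]
    have h1 : ‖Matrix.toEuclideanCLM (𝕜 := ℂ) P * Matrix.toEuclideanCLM (𝕜 := ℂ) (Matrix.diagonal c')
        * Matrix.toEuclideanCLM (𝕜 := ℂ) P⁻¹‖ ≤ np * ε * nq := by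
      calc ‖Matrix.toEuclideanCLM (𝕜 := ℂ) P * Matrix.toEuclideanCLM (𝕜 := ℂ) (Matrix.diagonal c')
            * Matrix.toEuclideanCLM (𝕜 := ℂ) P⁻¹‖
          ≤ ‖Matrix.toEuclideanCLM (𝕜 := ℂ) P * Matrix.toEuclideanCLM (𝕜 := ℂ) (Matrix.diagonal c')‖ * nq :=
            norm_mul_le _ _
        _ ≤ (np * ‖Matrix.toEuclideanCLM (𝕜 := ℂ) (Matrix.diagonal c')‖) * nq :=
            mul_le_mul_of_nonneg_right (norm_mul_le _ _) hnq0
        _ ≤ (np * ε) * nq := by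
            apply mul_le_mul_of_nonneg_right _ hnq0
            exact mul_le_mul_of_nonneg_left
              (norm_toEuclideanCLM_diagonal c' ε hεpos.le hcnorm) hnp0
    refine h1.trans ?_
    have hle : np * ε * nq = η * (np * nq) / (np * nq + 1) := by
      rw [hεdef]
      field_simp
    rw [hle, div_le_iff₀ (by positivity : (0:ℝ) < np * nq + 1)]
    nlinarith [mul_nonneg hnp0 hnq0]
  · -- eigenbasis
    have hW : ∀ i : Fin d, ∃ w : Fin d → ℂ,
        Module.End.HasEigenvector ((P * T' * P⁻¹).mulVecLin) (t' i) w :=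
      fun i => (hEig i).exists_hasEigenvector
    choose w hw using hW
    have hli : LinearIndependent ℂ w :=
      Module.End.eigenvectors_linearIndependent' ((P * T' * P⁻¹).mulVecLin) t' hinj' w hw
    have hcard : Fintype.card (Fin d) = Module.finrank ℂ (Fin d → ℂ) := by
      simp [Module.finrank_fin_fun]
    refine ⟨basisOfLinearIndependentOfCardEqFinrank hli hcard, fun i => ⟨t' i, ?_⟩⟩
    rw [coe_basisOfLinearIndependentOfCardEqFinrank]
    exact (hw i).apply_eq_smul
  · -- lam in spectrum
    exact (hspec' lam).mpr ⟨i₀, ht'i₀⟩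
  · -- multiplicity
    rw [hcp', rootMult_prod, Finset.card_eq_one]
    refine ⟨i₀, ?_⟩
    ext i
    simp only [Finset.mem_filter, Finset.mem_univ, true_and, Finset.mem_singleton]
    constructor
    · intro hi
      exact hinj' (by rw [hi, ht'i₀])
    · rintro rfl
      exact ht'i₀
  · -- gap
    intro μ hμ hμne
    obtain ⟨i, hi⟩ := (hspec' μ).mp hμ
    have hii₀ : i ≠ i₀ := by
      rintro rfl
      exact hμne (by rw [← hi, ht'i₀])
    have hμim : μ.im = (t i).im + c i := by
      rw [← hi, ht'eq i hii₀]
      simp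
    have h1 : lam.im + δ ≤ (t i).im := hgap (t i) (hspec i) (htne i hii₀)
    rw [hμim]
    have := (hc i).1
    linarith
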